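/- For p ∈ [0,1], define the channel K_p from M₂⊗M₂ to M₂⊗M₂ as the linear extension of K_p(X⊗Y) := p·Y⊗(Tr[X]·π) + (1−p)·(Tr[Y]·π)⊗X, where π := I/2; this is the second KPF16 protocol, which with probability p teleports Alice's qubit to Bob while replacing Bob's input by the maximally mixed state, and with probability 1−p does the reverse. Let S be the qubit swap channel, the linear extension of X⊗Y ↦ Y⊗X. Then for every p ∈ [0,1], the normalized diamond distance satisfies (1/2)‖K_p − S‖⋄ = 3/4. -/

import Mathlib

open Matrix Kronecker
open scoped ComplexOrder

noncomputable section

/-- The trace norm `‖X‖₁ = Tr[√(X†X)]`. -/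
def traceNorm {n : Type*} [Fintype n] [DecidableEq n] (X : Matrix n n ℂ) : ℝ :=
  (((Matrix.posSemidef_conjTranspose_mul_self X).1.eigenvectorUnitary.1 *
    diagonal ((fun x : ℝ => (x : ℂ)) ∘ (√·) ∘ (Matrix.posSemidef_conjTranspose_mul_self X).1.eigenvalues) *
    (star (Matrix.posSemidef_conjTranspose_mul_self X).1.eigenvectorUnitary : Matrix n n ℂ)).trace).re

/-- The extension `id_k ⊗ Φ` of a map on matrices, with the identity on the first factor. -/
def idTensor {k n m : Type*} (Φ : Matrix n n ℂ → Matrix m m ℂ)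
    (M : Matrix (k × n) (k × n) ℂ) : Matrix (k × m) (k × m) ℂ :=
  Matrix.of fun p q => Φ (Matrix.of fun a b => M (p.1, a) (q.1, b)) p.2 q.2

/-- A density matrix: positive semidefinite with unit trace. -/
def IsState {n : Type*} [Fintype n] (ρ : Matrix n n ℂ) : Prop :=
  ρ.PosSemidef ∧ ρ.trace = 1

/-- Normalized diamond distance between two maps on matrices, as the supremum over
bipartite input states (with a reference system of the same dimension as the input)
of the normalized trace distance of the outputs. -/
def dDist {n m : Type*} [Fintype n] [DecidableEq n] [Fintype m] [DecidableEq m]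
    (N M : Matrix n n ℂ → Matrix m m ℂ) : ℝ :=
  sSup {x : ℝ | ∃ ρ : Matrix (n × n) (n × n) ℂ, IsState ρ ∧
    x = (1 / 2) * traceNorm (idTensor N ρ - idTensor M ρ)}

/-- Complete positivity of a linear map on matrices: every finite identity extension
preserves positive semidefiniteness. -/
def IsCP {n m : Type*} [Fintype n] [DecidableEq n] [Fintype m] [DecidableEq m]
    (Φ : Matrix n n ℂ →ₗ[ℂ] Matrix m m ℂ) : Prop :=
  ∀ (r : ℕ) (M : Matrix (Fin r × n) (Fin r × n) ℂ), M.PosSemidef →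
    (idTensor (fun X => Φ X) M).PosSemidef

/-- Trace preservation of a linear map on matrices. -/
def IsTP {n m : Type*} [Fintype n] [Fintype m]
    (Φ : Matrix n n ℂ →ₗ[ℂ] Matrix m m ℂ) : Prop :=
  ∀ X, (Φ X).trace = X.trace

/-- Choi operator of a map on matrices: `Γ^Φ = Σ_{i,j} |i⟩⟨j| ⊗ Φ(|i⟩⟨j|)`. -/
def choi {n m : Type*} [DecidableEq n]
    (Φ : Matrix n n ℂ → Matrix m m ℂ) : Matrix (n × m) (n × m) ℂ :=
  Matrix.of fun p q => Φ (Matrix.single p.1 q.1 1) p.2 q.2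

/-- The swap operator `F = Σ_{i,j} |i⟩⟨j| ⊗ |j⟩⟨i|` on `ℂ^d ⊗ ℂ^d`. -/
def swapOp (d : ℕ) : Matrix (Fin d × Fin d) (Fin d × Fin d) ℂ :=
  Matrix.of fun p q => if p.1 = q.2 ∧ p.2 = q.1 then 1 else 0

/-- The swap channel `S^d(X) = F X F†`. -/
def swapCh (d : ℕ) (X : Matrix (Fin d × Fin d) (Fin d × Fin d) ℂ) :
    Matrix (Fin d × Fin d) (Fin d × Fin d) ℂ :=
  swapOp d * X * (swapOp d)ᴴ

/-- Square root of a positive semidefinite matrix (junk value `0` otherwise). -/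
def msqrt {n : Type*} [Fintype n] [DecidableEq n] (X : Matrix n n ℂ) : Matrix n n ℂ :=
  letI := Classical.propDecidable X.PosSemidef
  if h : X.PosSemidef then
    h.1.eigenvectorUnitary.1 * diagonal ((fun x : ℝ => (x : ℂ)) ∘ (√·) ∘ h.1.eigenvalues) *
      (star h.1.eigenvectorUnitary : Matrix n n ℂ) else 0

/-- Fidelity `F(ω,τ) = ‖√ω √τ‖₁²`. -/
def fid {n : Type*} [Fintype n] [DecidableEq n] (ω τ : Matrix n n ℂ) : ℝ :=
  (traceNorm (msqrt ω * msqrt τ)) ^ 2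

/-- Channel fidelity: the infimum of output fidelities over bipartite input states. -/
def cFid {n m : Type*} [Fintype n] [DecidableEq n] [Fintype m] [DecidableEq m]
    (N M : Matrix n n ℂ → Matrix m m ℂ) : ℝ :=
  sInf {x : ℝ | ∃ ρ : Matrix (n × n) (n × n) ℂ, IsState ρ ∧
    x = fid (idTensor N ρ) (idTensor M ρ)}

/-- Partial trace over the second (right) factor. -/
def ptrR {a b : Type*} [Fintype b] (X : Matrix (a × b) (a × b) ℂ) : Matrix a a ℂ :=
  Matrix.of fun i j => ∑ k, X (i, k) (j, k)

/-- Unnormalized maximally entangled operator `Γ = |Γ⟩⟨Γ|` on `ℂ^D ⊗ ℂ^D`. -/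
def gamOp (D : ℕ) : Matrix (Fin D × Fin D) (Fin D × Fin D) ℂ :=
  Matrix.of fun p q => if p.1 = p.2 ∧ q.1 = q.2 then 1 else 0

/-- Maximally entangled state `Φ = Γ/D` on `ℂ^D ⊗ ℂ^D`. -/
def phiD (D : ℕ) : Matrix (Fin D × Fin D) (Fin D × Fin D) ℂ :=
  ((D : ℂ))⁻¹ • gamOp D

/-- Partial transpose over Bob's factors `B, B̂, B'` of a matrix on the six factors
`(A ⊗ B) ⊗ (Â ⊗ B̂) ⊗ (A' ⊗ B')`. -/
def ptB6 {A B AH BH A' B' : Type*}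
    (X : Matrix (((A × B) × (AH × BH)) × (A' × B')) (((A × B) × (AH × BH)) × (A' × B')) ℂ) :
    Matrix (((A × B) × (AH × BH)) × (A' × B')) (((A × B) × (AH × BH)) × (A' × B')) ℂ :=
  Matrix.of fun p q =>
    X (((p.1.1.1, q.1.1.2), (p.1.2.1, q.1.2.2)), (p.2.1, q.2.2))
      (((q.1.1.1, p.1.1.2), (q.1.2.1, p.1.2.2)), (q.2.1, p.2.2))

/-- Partial transpose over the factor `B̂` of a matrix on `Â ⊗ B̂`. -/
def ptBh2 {AH BH : Type*} (X : Matrix (AH × BH) (AH × BH) ℂ) : Matrix (AH × BH) (AH × BH) ℂ :=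
  Matrix.of fun g g' => X (g.1, g'.2) (g'.1, g.2)

/-- Contraction `Tr_{ÂB̂}[(T_{ÂB̂}(ρ) ⊗ I) P]` of a six-factor operator with a resource state,
yielding the Choi operator of the induced channel `ω ↦ P(ω ⊗ ρ)`. -/
def contractRes {A B AH BH A' B' : Type*} [Fintype AH] [Fintype BH]
    (ρ : Matrix (AH × BH) (AH × BH) ℂ)
    (P : Matrix (((A × B) × (AH × BH)) × (A' × B')) (((A × B) × (AH × BH)) × (A' × B')) ℂ) :
    Matrix ((A × B) × (A' × B')) ((A × B) × (A' × B')) ℂ :=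
  Matrix.of fun p q => ∑ h, ∑ h', ρ h h' * P ((p.1, h), p.2) ((q.1, h'), q.2)


/-- The maximally mixed qubit state `π = I/2`. -/
def piq : Matrix (Fin 2) (Fin 2) ℂ := (2 : ℂ)⁻¹ • 1

/-- The qubit maximally entangled state `Φ = Γ/2`. -/
def phiQ : Matrix (Fin 2 × Fin 2) (Fin 2 × Fin 2) ℂ := (2 : ℂ)⁻¹ • gamOp 2

/-- Partial trace over the first qubit factor. -/
def ptrFst (X : Matrix (Fin 2 × Fin 2) (Fin 2 × Fin 2) ℂ) : Matrix (Fin 2) (Fin 2) ℂ :=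
  Matrix.of fun j j' => ∑ i, X (i, j) (i, j')

/-- Partial trace over the second qubit factor. -/
def ptrSnd (X : Matrix (Fin 2 × Fin 2) (Fin 2 × Fin 2) ℂ) : Matrix (Fin 2) (Fin 2) ℂ :=
  Matrix.of fun i i' => ∑ j, X (i, j) (i', j)

/-- The first KPF16 bipartite channel with trigger probabilities `p₁, p₂`: the linear
extension of `X ⊗ Y ↦ (1−p₁)(1−p₂)·Tr[X]Tr[Y]·Φ + (1−p₁)p₂·Y ⊗ (Tr[X]·π)
+ p₁(1−p₂)·(Tr[Y]·π) ⊗ X + p₁p₂·Tr[X]Tr[Y]·π⊗π`. -/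
def kpfCh (p₁ p₂ : ℝ) (ρ : Matrix (Fin 2 × Fin 2) (Fin 2 × Fin 2) ℂ) :
    Matrix (Fin 2 × Fin 2) (Fin 2 × Fin 2) ℂ :=
  (((1 - p₁) * (1 - p₂) : ℝ) : ℂ) • ρ.trace • phiQ
    + (((1 - p₁) * p₂ : ℝ) : ℂ) • (ptrFst ρ ⊗ₖ piq)
    + ((p₁ * (1 - p₂) : ℝ) : ℂ) • (piq ⊗ₖ ptrSnd ρ)
    + ((p₁ * p₂ : ℝ) : ℂ) • ρ.trace • (piq ⊗ₖ piq)

/-- The second KPF16 channel: with probability `p` teleport Alice's qubit to Bob while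
replacing Bob's input by the maximally mixed state, and with probability `1 − p` the
reverse; the linear extension of
`X ⊗ Y ↦ p·Y ⊗ (Tr[X]·π) + (1−p)·(Tr[Y]·π) ⊗ X`. -/
def kpf2Ch (p : ℝ) (ρ : Matrix (Fin 2 × Fin 2) (Fin 2 × Fin 2) ℂ) :
    Matrix (Fin 2 × Fin 2) (Fin 2 × Fin 2) ℂ :=
  ((p : ℝ) : ℂ) • (ptrFst ρ ⊗ₖ piq) + (((1 - p) : ℝ) : ℂ) • (piq ⊗ₖ ptrSnd ρ)

namespace Aux

open scoped MatrixOrder in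
lemma traceNorm_eq_of_sq {n : Type*} [Fintype n] [DecidableEq n]
    {X Y : Matrix n n ℂ} (hY : Y.PosSemidef) (h : Y ^ 2 = Xᴴ * X) :
    traceNorm X = Y.trace.re := by
  have hXX := posSemidef_conjTranspose_mul_self X
  have h1 : CFC.sqrt (Xᴴ * X) = Y :=
    (CFC.sqrt_eq_iff _ _ hXX.nonneg hY.nonneg).2 (by rw [← sq]; exact h)
  have h2 : CFC.sqrt (Xᴴ * X) = hXX.1.eigenvectorUnitary.1 *
      diagonal ((fun x : ℝ => (x : ℂ)) ∘ (√·) ∘ hXX.1.eigenvalues) *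
      (star hXX.1.eigenvectorUnitary : Matrix n n ℂ) := by
    rw [CFC.sqrt_eq_cfc, cfc_nnreal_eq_real _ _, hXX.1.cfc_eq]
    simp only [IsHermitian.cfc, Unitary.conjStarAlgAut_apply]
    congr 3
    funext i
    simp [max_eq_left (hXX.eigenvalues_nonneg i)]
  rw [traceNorm, ← h2, h1]

lemma conj_diag_nonneg {n : Type*} [Fintype n] [DecidableEq n]
    {M : Matrix n n ℂ} (hM : M.PosSemidef) (U : Matrix n n ℂ) (i : n) :
    0 ≤ ((Uᴴ * M * U) i i).re ∧ ((Uᴴ * M * U) i i).im = 0 := by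
  have h := (hM.conjTranspose_mul_mul_same U).dotProduct_mulVec_nonneg (Pi.single i 1)
  have hdiag : star (Pi.single i 1) ⬝ᵥ ((Uᴴ * M * U) *ᵥ (Pi.single i 1)) = (Uᴴ * M * U) i i := by
    simp [dotProduct, mulVec_single, Pi.single_apply, apply_ite (star : ℂ → ℂ), Finset.sum_ite_eq']
  rw [hdiag] at h
  rw [Complex.nonneg_iff] at h
  exact ⟨h.1, h.2.symm⟩

/-- trace norm of a Hermitian matrix equals sum of |eigenvalues| -/
lemma traceNorm_hermitian {n : Type*} [Fintype n] [DecidableEq n]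
    {X : Matrix n n ℂ} (hX : X.IsHermitian) :
    traceNorm X = ∑ i, |hX.eigenvalues i| := by
  set U : Matrix n n ℂ := (hX.eigenvectorUnitary : Matrix n n ℂ) with hUdef
  have hU1 : star U * U = 1 := Matrix.mem_unitaryGroup_iff'.mp hX.eigenvectorUnitary.2
  have hU2 : U * star U = 1 := Matrix.mem_unitaryGroup_iff.mp hX.eigenvectorUnitary.2
  set Y : Matrix n n ℂ := U * Matrix.diagonal (fun i => (Complex.ofReal |hX.eigenvalues i|)) * star U with hYdef
  have hspec : X = U * Matrix.diagonal (RCLike.ofReal ∘ hX.eigenvalues) * star U := by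
    rw [hUdef]; exact hX.spectral_theorem
  have hYpsd : Y.PosSemidef := by
    apply Matrix.PosSemidef.mul_mul_conjTranspose_same (B := U)
    exact Matrix.PosSemidef.diagonal (fun i => by simp [Complex.nonneg_iff, abs_nonneg])
  have hsq : Y ^ 2 = Xᴴ * X := by
    rw [hX.eq, pow_two, hYdef]
    conv_rhs => rw [hspec]
    rw [show ∀ A B C D E F : Matrix n n ℂ, (A*B*C) * (D*E*F) = A*B*((C*D)*(E*F)) by intros; noncomm_ring]
    rw [show ∀ A B C D E F : Matrix n n ℂ, (A*B*C) * (D*E*F) = A*B*((C*D)*(E*F)) by intros; noncomm_ring]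
    rw [hU1, Matrix.one_mul, Matrix.one_mul]
    rw [show ∀ A B C D : Matrix n n ℂ, A*B*(C*D) = A*(B*C)*D by intros; noncomm_ring]
    rw [show ∀ A B C D : Matrix n n ℂ, A*B*(C*D) = A*(B*C)*D by intros; noncomm_ring]
    have hDD : (Matrix.diagonal fun i => Complex.ofReal |hX.eigenvalues i|) *
          (Matrix.diagonal fun i => Complex.ofReal |hX.eigenvalues i|)
        = Matrix.diagonal (RCLike.ofReal ∘ hX.eigenvalues) *
          Matrix.diagonal (RCLike.ofReal ∘ hX.eigenvalues) := by
      rw [Matrix.diagonal_mul_diagonal, Matrix.diagonal_mul_diagonal]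
      ext i j
      simp only [Matrix.diagonal_apply, Pi.mul_apply, Function.comp_apply]
      split_ifs
      · rw [← Complex.ofReal_mul, abs_mul_abs_self]; exact Complex.ofReal_mul _ _
      · rfl
    rw [hDD]
  rw [traceNorm_eq_of_sq hYpsd hsq, hYdef]
  rw [Matrix.trace_mul_cycle, hU1, Matrix.one_mul, Matrix.trace_diagonal]
  rw [Complex.re_sum]
  simp

/-- the main bound -/
lemma main_bound {n : Type*} [Fintype n] [DecidableEq n]
    {σ σ' : Matrix n n ℂ} (hσ : σ.PosSemidef) (hσ' : σ'.PosSemidef)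
    (htσ : σ.trace = 1) (htσ' : σ'.trace = 1)
    (hdom : ((4:ℂ) • σ' - σ).PosSemidef) :
    traceNorm (σ' - σ) ≤ 3/2 := by
  have hX : (σ' - σ).IsHermitian := hσ'.1.sub hσ.1
  rw [traceNorm_hermitian hX]
  set U : Matrix n n ℂ := (hX.eigenvectorUnitary : Matrix n n ℂ) with hUdef
  have hU1 : star U * U = 1 := Matrix.mem_unitaryGroup_iff'.mp hX.eigenvectorUnitary.2
  have hU2 : U * star U = 1 := Matrix.mem_unitaryGroup_iff.mp hX.eigenvectorUnitary.2
  have hstar : star U = Uᴴ := rfl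
  set s : n → ℝ := fun i => ((Uᴴ * σ * U) i i).re with hsdef
  set s' : n → ℝ := fun i => ((Uᴴ * σ' * U) i i).re with hs'def
  -- diagonalization
  have hspec : (σ' - σ) = U * Matrix.diagonal (RCLike.ofReal ∘ hX.eigenvalues) * star U := by
    rw [hUdef]; exact hX.spectral_theorem
  have hdiagX : Uᴴ * (σ' - σ) * U = Matrix.diagonal (fun i => (hX.eigenvalues i : ℂ)) := by
    conv_lhs => rw [hspec]
    rw [← hstar]
    rw [show ∀ A B C D : Matrix n n ℂ, star U * (A*B*C) * D = (star U * A) * B * (C * D) by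
      intros; noncomm_ring]
    rw [hU1, Matrix.one_mul, Matrix.mul_one]
    rfl
  have hmu : ∀ i, hX.eigenvalues i = s' i - s i := by
    intro i
    have h1 : (Uᴴ * (σ' - σ) * U) i i = (Uᴴ * σ' * U) i i - (Uᴴ * σ * U) i i := by
      simp [Matrix.mul_sub, Matrix.sub_mul]
    rw [hdiagX] at h1
    have := congrArg Complex.re h1
    simpa using this
  have hs_nonneg : ∀ i, 0 ≤ s i := fun i => (conj_diag_nonneg hσ U i).1
  have hs'_nonneg : ∀ i, 0 ≤ s' i := fun i => (conj_diag_nonneg hσ' U i).1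
  have hdom' : ∀ i, s i ≤ 4 * s' i := by
    intro i
    have h := (conj_diag_nonneg hdom U i).1
    have h1 : (Uᴴ * ((4:ℂ) • σ' - σ) * U) i i
        = 4 * ((Uᴴ * σ' * U) i i) - (Uᴴ * σ * U) i i := by
      simp [Matrix.mul_sub, Matrix.sub_mul, Matrix.mul_smul, Matrix.smul_mul, smul_eq_mul]
    rw [h1] at h
    simp only [Complex.sub_re] at h
    have : (4 * ((Uᴴ * σ' * U) i i)).re = 4 * s' i := by
      simp [hs'def, Complex.mul_re]
    rw [this] at h
    linarith
  -- traces
  have htrs : ∑ i, s i = 1 := by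
    have : (Uᴴ * σ * U).trace = σ.trace := by
      rw [Matrix.trace_mul_cycle, ← hstar, hU2, Matrix.one_mul]
    have h2 := congrArg Complex.re this
    rw [htσ] at h2
    simpa [Matrix.trace, Matrix.diag, Complex.re_sum, hsdef] using h2
  have htrs' : ∑ i, s' i = 1 := by
    have : (Uᴴ * σ' * U).trace = σ'.trace := by
      rw [Matrix.trace_mul_cycle, ← hstar, hU2, Matrix.one_mul]
    have h2 := congrArg Complex.re this
    rw [htσ'] at h2
    simpa [Matrix.trace, Matrix.diag, Complex.re_sum, hs'def] using h2
  -- arithmetic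
  calc ∑ i, |hX.eigenvalues i|
      = ∑ i, ((s' i - s i) + 2 * max (s i - s' i) 0) := by
        refine Finset.sum_congr rfl fun i _ => ?_
        rw [hmu i]
        rcases le_total (s i) (s' i) with h | h
        · rw [abs_of_nonneg (by linarith), max_eq_right (by linarith)]; ring
        · rw [abs_of_nonpos (by linarith), max_eq_left (by linarith)]; ring
    _ ≤ ∑ i, ((s' i - s i) + 2 * ((3/4) * s i)) := by
        refine Finset.sum_le_sum fun i _ => ?_
        have h1 : max (s i - s' i) 0 ≤ (3/4) * s i := by
          apply max_le
          · have := hdom' i; linarith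
          · have := hs_nonneg i; linarith
        linarith
    _ = 3/2 := by
        rw [Finset.sum_add_distrib]
        rw [Finset.sum_sub_distrib]
        rw [htrs, htrs', ← Finset.mul_sum, ← Finset.mul_sum, htrs]
        ring


def lam {n : Type*} [Fintype n] (σ : Matrix (n × Fin 2) (n × Fin 2) ℂ) :
    Matrix (n × Fin 2) (n × Fin 2) ℂ :=
  Matrix.of fun p q => if p.2 = q.2 then (2:ℂ)⁻¹ * ∑ k, σ (p.1, k) (q.1, k) else 0

def W (n : Type*) [DecidableEq n] (b k : Fin 2) : Matrix (n × Fin 2) (n × Fin 2) ℂ :=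
  Matrix.of fun q r => if q.2 = k ∧ r = (q.1, b) then 1 else 0

lemma WsW_apply {n : Type*} [Fintype n] [DecidableEq n]
    (σ : Matrix (n × Fin 2) (n × Fin 2) ℂ) (b k : Fin 2) (p q : n × Fin 2) :
    ((W n b k)ᴴ * σ * W n b k) p q
      = if p.2 = b ∧ q.2 = b then σ (p.1, k) (q.1, k) else 0 := by
  have h1 : ∀ v, ((W n b k)ᴴ * σ) p v = if p.2 = b then σ (p.1, k) v else 0 := by
    intro v
    rw [Matrix.mul_apply, Fintype.sum_prod_type]
    simp only [W, Matrix.conjTranspose_apply, Matrix.of_apply, apply_ite (star : ℂ → ℂ),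
      star_one, star_zero, ite_mul, one_mul, zero_mul, Prod.ext_iff, Prod.mk.injEq]
    by_cases hb : p.2 = b <;> fin_cases k <;>
      simp [hb, Finset.sum_ite_eq', Finset.sum_ite_eq, eq_comm (a := p.1), and_assoc]
  rw [Matrix.mul_apply, Fintype.sum_prod_type]
  simp only [h1]
  simp only [W, Matrix.of_apply, ite_mul, mul_ite, mul_one, mul_zero, zero_mul,
    Prod.ext_iff, Prod.mk.injEq]
  by_cases hp : p.2 = b <;> by_cases hq : q.2 = b <;> fin_cases k <;>
    simp [hp, hq, Finset.sum_ite_eq', Finset.sum_ite_eq, eq_comm (a := q.1), and_assoc]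

lemma lam_eq {n : Type*} [Fintype n] [DecidableEq n] (σ : Matrix (n × Fin 2) (n × Fin 2) ℂ) :
    lam σ = (2:ℂ)⁻¹ • ∑ b : Fin 2, ∑ k : Fin 2, (W n b k)ᴴ * σ * W n b k := by
  ext ⟨i, c⟩ ⟨j, c'⟩
  simp only [Matrix.smul_apply, Matrix.sum_apply, Fin.sum_univ_two, lam,
    Matrix.of_apply, smul_eq_mul, Matrix.add_apply]
  rw [WsW_apply, WsW_apply, WsW_apply, WsW_apply]
  fin_cases c <;> fin_cases c' <;> simp <;> ring

lemma W_sum_one {n : Type*} [Fintype n] [DecidableEq n] :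
    W n 0 0 + W n 1 1 = 1 := by
  ext ⟨i, c⟩ ⟨j, c'⟩
  fin_cases c <;> fin_cases c' <;>
    simp [W, Matrix.one_apply, Prod.ext_iff, and_comm, eq_comm]

lemma psd_smul {m : Type*} [Fintype m] {M : Matrix m m ℂ} (hM : M.PosSemidef)
    {c : ℂ} (hc : 0 ≤ c) : (c • M).PosSemidef := by
  refine Matrix.PosSemidef.of_dotProduct_mulVec_nonneg ?_ ?_
  · have hcr : star c = c := by
      rw [Complex.nonneg_iff] at hc
      apply Complex.ext <;> simp [← hc.2]
    rw [Matrix.IsHermitian, Matrix.conjTranspose_smul, hcr, hM.1.eq]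
  · intro x
    rw [Matrix.smul_mulVec, dotProduct_smul, smul_eq_mul]
    exact mul_nonneg hc (hM.dotProduct_mulVec_nonneg x)

lemma lam_psd {n : Type*} [Fintype n] [DecidableEq n]
    {σ : Matrix (n × Fin 2) (n × Fin 2) ℂ} (hσ : σ.PosSemidef) : (lam σ).PosSemidef := by
  rw [lam_eq]
  refine psd_smul ?_ (by norm_num [Complex.nonneg_iff])
  rw [Fin.sum_univ_two, Fin.sum_univ_two, Fin.sum_univ_two]
  exact ((hσ.conjTranspose_mul_mul_same _).add (hσ.conjTranspose_mul_mul_same _)).add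
    ((hσ.conjTranspose_mul_mul_same _).add (hσ.conjTranspose_mul_mul_same _))

lemma alg {m : Type*} [Fintype m] [DecidableEq m] (A B C D S : Matrix m m ℂ) (h1 : A + B = 1) :
    (4:ℂ) • ((2:ℂ)⁻¹ • ((Aᴴ*S*A + Cᴴ*S*C) + (Dᴴ*S*D + Bᴴ*S*B))) - S
      = (A-B)ᴴ*S*(A-B) + ((2:ℂ)•(Cᴴ*S*C) + (2:ℂ)•(Dᴴ*S*D)) := by
  have hS : S = (A+B)ᴴ*S*(A+B) := by
    rw [h1, Matrix.conjTranspose_one, Matrix.one_mul, Matrix.mul_one]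
  nth_rewrite 5 [hS]
  rw [smul_smul]
  have h42 : (4:ℂ) * 2⁻¹ = 2 := by norm_num
  rw [h42]
  simp only [Matrix.conjTranspose_add, Matrix.conjTranspose_sub, Matrix.add_mul,
    Matrix.sub_mul, Matrix.mul_add, Matrix.mul_sub]
  module

lemma key {n : Type*} [Fintype n] [DecidableEq n]
    {σ : Matrix (n × Fin 2) (n × Fin 2) ℂ} (hσ : σ.PosSemidef) :
    ((4:ℂ) • lam σ - σ).PosSemidef := by
  have e : (4:ℂ) • lam σ - σ
      = (W n 0 0 - W n 1 1)ᴴ*σ*(W n 0 0 - W n 1 1)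
        + ((2:ℂ)•((W n 0 1)ᴴ*σ*(W n 0 1)) + (2:ℂ)•((W n 1 0)ᴴ*σ*(W n 1 0))) := by
    rw [lam_eq, Fin.sum_univ_two, Fin.sum_univ_two, Fin.sum_univ_two]
    exact alg _ _ _ _ _ W_sum_one
  rw [e]
  have two_nonneg : (0:ℂ) ≤ 2 := by norm_num [Complex.nonneg_iff]
  exact ((hσ.conjTranspose_mul_mul_same _).add
    ((psd_smul (hσ.conjTranspose_mul_mul_same _) two_nonneg).add
      (psd_smul (hσ.conjTranspose_mul_mul_same _) two_nonneg)))

lemma lam_trace {n : Type*} [Fintype n] [DecidableEq n]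
    (σ : Matrix (n × Fin 2) (n × Fin 2) ℂ) : (lam σ).trace = σ.trace := by
  simp only [Matrix.trace, Matrix.diag, lam, Matrix.of_apply, Fintype.sum_prod_type,
    Fin.sum_univ_two, if_pos rfl, if_true]
  refine Finset.sum_congr rfl fun i _ => by ring


/-! ### Specific structures for statement 17 -/

abbrev Q2 := Fin 2 × Fin 2
abbrev I16 := Q2 × Q2

def eSw : I16 ≃ I16 :=
  ⟨fun x => (x.1, (x.2.2, x.2.1)), fun x => (x.1, (x.2.2, x.2.1)), fun _ => rfl, fun _ => rfl⟩

def g1 : I16 ≃ ((Q2 × Fin 2) × Fin 2) :=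
  ⟨fun x => ((x.1, x.2.1), x.2.2), fun y => (y.1.1, (y.1.2, y.2)), fun _ => rfl, fun _ => rfl⟩

def g2 : I16 ≃ ((Q2 × Fin 2) × Fin 2) :=
  ⟨fun x => ((x.1, x.2.2), x.2.1), fun y => (y.1.1, (y.2, y.1.2)), fun _ => rfl, fun _ => rfl⟩

def reord : I16 ≃ (Q2 × Q2) :=
  ⟨fun x => ((x.1.1, x.2.1), (x.1.2, x.2.2)), fun y => ((y.1.1, y.2.1), (y.1.2, y.2.2)),
    fun _ => rfl, fun _ => rfl⟩

def sig1 (σ : Matrix I16 I16 ℂ) : Matrix I16 I16 ℂ :=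
  (lam (σ.submatrix ⇑g1.symm ⇑g1.symm)).submatrix ⇑g1 ⇑g1

def sig2 (σ : Matrix I16 I16 ℂ) : Matrix I16 I16 ℂ :=
  (lam (σ.submatrix ⇑g2.symm ⇑g2.symm)).submatrix ⇑g2 ⇑g2

lemma trace_submatrix_equiv {m k : Type*} [Fintype m] [Fintype k]
    (e : k ≃ m) (M : Matrix m m ℂ) : (M.submatrix ⇑e ⇑e).trace = M.trace := by
  simp only [Matrix.trace, Matrix.diag, Matrix.submatrix_apply]
  exact Fintype.sum_equiv e _ _ fun i => rfl

lemma idT_swap (ρ : Matrix I16 I16 ℂ) :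
    idTensor (swapCh 2) ρ = ρ.submatrix ⇑eSw ⇑eSw := by
  ext ⟨r, a, b⟩ ⟨r', a', b'⟩
  fin_cases a <;> fin_cases b <;> fin_cases a' <;> fin_cases b' <;>
    simp [idTensor, swapCh, swapOp, eSw, Matrix.mul_apply, Fintype.sum_prod_type,
      Fin.sum_univ_two, Matrix.conjTranspose_apply]

lemma idT_kpf (p : ℝ) (ρ : Matrix I16 I16 ℂ) :
    idTensor (kpf2Ch p) ρ
      = ((p : ℝ) : ℂ) • sig1 (ρ.submatrix ⇑eSw ⇑eSw)
        + (((1 - p) : ℝ) : ℂ) • sig2 (ρ.submatrix ⇑eSw ⇑eSw) := by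
  ext ⟨r, a, b⟩ ⟨r', a', b'⟩
  fin_cases a <;> fin_cases b <;> fin_cases a' <;> fin_cases b' <;>
    simp [idTensor, kpf2Ch, ptrFst, ptrSnd, piq, sig1, sig2, lam, g1, g2, eSw,
      Matrix.kroneckerMap_apply, Matrix.one_apply, Fin.sum_univ_two, Matrix.smul_apply,
      Matrix.add_apply, Matrix.submatrix_apply] <;> (try ring) <;> (try tauto)

lemma ub (p : ℝ) (hp : p ∈ Set.Icc (0 : ℝ) 1) (ρ : Matrix I16 I16 ℂ) (hρ : IsState ρ) :
    (1/2) * traceNorm (idTensor (kpf2Ch p) ρ - idTensor (swapCh 2) ρ) ≤ 3/4 := by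
  obtain ⟨hpsd, htr⟩ := hρ
  set σ : Matrix I16 I16 ℂ := ρ.submatrix ⇑eSw ⇑eSw with hσdef
  have hσpsd : σ.PosSemidef := hpsd.submatrix _
  have hσtr : σ.trace = 1 := by rw [hσdef, trace_submatrix_equiv]; exact htr
  have hs1psd : (sig1 σ).PosSemidef := (lam_psd (hσpsd.submatrix _)).submatrix _
  have hs2psd : (sig2 σ).PosSemidef := (lam_psd (hσpsd.submatrix _)).submatrix _
  have hs1tr : (sig1 σ).trace = 1 := by
    rw [sig1, trace_submatrix_equiv, lam_trace, trace_submatrix_equiv]; exact hσtr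
  have hs2tr : (sig2 σ).trace = 1 := by
    rw [sig2, trace_submatrix_equiv, lam_trace, trace_submatrix_equiv]; exact hσtr
  have hdom1 : ((4:ℂ) • sig1 σ - σ).PosSemidef := by
    have h := (key (hσpsd.submatrix ⇑g1.symm)).submatrix ⇑g1
    have e1 : (((4:ℂ) • lam (σ.submatrix ⇑g1.symm ⇑g1.symm)
          - σ.submatrix ⇑g1.symm ⇑g1.symm).submatrix ⇑g1 ⇑g1)
        = (4:ℂ) • sig1 σ - σ := by
      ext i j
      simp [sig1, Matrix.submatrix_apply, Matrix.sub_apply, Matrix.smul_apply,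
        Equiv.symm_apply_apply]
    rwa [e1] at h
  have hdom2 : ((4:ℂ) • sig2 σ - σ).PosSemidef := by
    have h := (key (hσpsd.submatrix ⇑g2.symm)).submatrix ⇑g2
    have e2 : (((4:ℂ) • lam (σ.submatrix ⇑g2.symm ⇑g2.symm)
          - σ.submatrix ⇑g2.symm ⇑g2.symm).submatrix ⇑g2 ⇑g2)
        = (4:ℂ) • sig2 σ - σ := by
      ext i j
      simp [sig2, Matrix.submatrix_apply, Matrix.sub_apply, Matrix.smul_apply,
        Equiv.symm_apply_apply]
    rwa [e2] at h
  set σ' : Matrix I16 I16 ℂ :=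
    ((p : ℝ) : ℂ) • sig1 σ + (((1 - p) : ℝ) : ℂ) • sig2 σ with hσ'def
  have hcp : (0:ℂ) ≤ ((p : ℝ) : ℂ) := Complex.zero_le_real.mpr hp.1
  have hcq : (0:ℂ) ≤ (((1 - p) : ℝ) : ℂ) := Complex.zero_le_real.mpr (by linarith [hp.2])
  have hσ'psd : σ'.PosSemidef := (psd_smul hs1psd hcp).add (psd_smul hs2psd hcq)
  have hσ'tr : σ'.trace = 1 := by
    rw [hσ'def, Matrix.trace_add, Matrix.trace_smul, Matrix.trace_smul, hs1tr, hs2tr]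
    simp only [smul_eq_mul]
    push_cast
    ring
  have hdom : ((4:ℂ) • σ' - σ).PosSemidef := by
    have e : ((4:ℂ) • σ' - σ)
        = ((p : ℝ) : ℂ) • ((4:ℂ) • sig1 σ - σ) + (((1 - p) : ℝ) : ℂ) • ((4:ℂ) • sig2 σ - σ) := by
      have hps : (((1 - p) : ℝ) : ℂ) = 1 - ((p : ℝ) : ℂ) := by push_cast; ring
      rw [hσ'def, hps]
      module
    rw [e]
    exact (psd_smul hdom1 hcp).add (psd_smul hdom2 hcq)
  have hb := main_bound hσpsd hσ'psd hσtr hσ'tr hdom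
  rw [idT_kpf, idT_swap]
  rw [← hσdef, ← hσ'def]
  linarith

/-! witness -/

def phiM : Matrix Q2 Q2 ℂ := Matrix.of fun p q => if p.1 = p.2 ∧ q.1 = q.2 then (2:ℂ)⁻¹ else 0

def P1 : Matrix I16 I16 ℂ := (phiM ⊗ₖ (1 : Matrix Q2 Q2 ℂ)).submatrix ⇑reord ⇑reord
def P2 : Matrix I16 I16 ℂ := ((1 : Matrix Q2 Q2 ℂ) ⊗ₖ phiM).submatrix ⇑reord ⇑reord
def E12 : Matrix I16 I16 ℂ := (phiM ⊗ₖ phiM).submatrix ⇑reord ⇑reord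

lemma phiM_mul : phiM * phiM = phiM := by
  ext ⟨x, y⟩ ⟨x', y'⟩
  fin_cases x <;> fin_cases y <;> fin_cases x' <;> fin_cases y' <;>
    simp [phiM, Matrix.mul_apply, Fintype.sum_prod_type, Fin.sum_univ_two] <;> norm_num

lemma phiM_herm : phiMᴴ = phiM := by
  ext ⟨x, y⟩ ⟨x', y'⟩
  fin_cases x <;> fin_cases y <;> fin_cases x' <;> fin_cases y' <;>
    simp [phiM, Matrix.conjTranspose_apply] <;> norm_num

lemma phiM_trace : phiM.trace = 1 := by
  simp [Matrix.trace, Matrix.diag, phiM, Fintype.sum_prod_type, Fin.sum_univ_two]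

lemma kron_ct (A B : Matrix Q2 Q2 ℂ) : (A ⊗ₖ B)ᴴ = Aᴴ ⊗ₖ Bᴴ := by
  ext p q
  simp [Matrix.conjTranspose_apply, Matrix.kroneckerMap_apply, mul_comm]

lemma P1_herm : P1ᴴ = P1 := by
  rw [P1, Matrix.conjTranspose_submatrix, kron_ct, phiM_herm, Matrix.conjTranspose_one]

lemma P2_herm : P2ᴴ = P2 := by
  rw [P2, Matrix.conjTranspose_submatrix, kron_ct, phiM_herm, Matrix.conjTranspose_one]

lemma E12_herm : E12ᴴ = E12 := by
  rw [E12, Matrix.conjTranspose_submatrix, kron_ct, phiM_herm]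

lemma kron_sub_mul (A B C D : Matrix Q2 Q2 ℂ) :
    ((A ⊗ₖ B).submatrix ⇑reord ⇑reord) * ((C ⊗ₖ D).submatrix ⇑reord ⇑reord)
      = ((A * C) ⊗ₖ (B * D)).submatrix ⇑reord ⇑reord := by
  rw [show (⇑reord : I16 → Q2 × Q2) = ⇑(reord : I16 ≃ (Q2 × Q2)) from rfl]
  rw [Matrix.submatrix_mul_equiv, Matrix.mul_kronecker_mul]

lemma P11 : P1 * P1 = P1 := by rw [P1, kron_sub_mul, phiM_mul, Matrix.one_mul]
lemma P22 : P2 * P2 = P2 := by rw [P2, kron_sub_mul, phiM_mul, Matrix.one_mul]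
lemma P12 : P1 * P2 = E12 := by
  rw [P1, P2, kron_sub_mul, Matrix.mul_one, Matrix.one_mul]; rfl
lemma P21 : P2 * P1 = E12 := by
  rw [P1, P2, kron_sub_mul, Matrix.mul_one, Matrix.one_mul]; rfl
lemma P1E : P1 * E12 = E12 := by rw [P1, E12, kron_sub_mul, phiM_mul, Matrix.one_mul]
lemma EP1 : E12 * P1 = E12 := by rw [P1, E12, kron_sub_mul, phiM_mul, Matrix.mul_one]
lemma P2E : P2 * E12 = E12 := by rw [P2, E12, kron_sub_mul, phiM_mul, Matrix.one_mul]
lemma EP2 : E12 * P2 = E12 := by rw [P2, E12, kron_sub_mul, phiM_mul, Matrix.mul_one]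
lemma EE : E12 * E12 = E12 := by rw [E12, kron_sub_mul, phiM_mul]

lemma psd_of_herm_idem {m : Type*} [Fintype m] [DecidableEq m] {M : Matrix m m ℂ}
    (h1 : Mᴴ = M) (h2 : M * M = M) : M.PosSemidef := by
  have h3 : M = Mᴴ * M := by rw [h1, h2]
  rw [h3]
  exact Matrix.posSemidef_conjTranspose_mul_self M

lemma P1_tr : P1.trace = 4 := by
  rw [P1, trace_submatrix_equiv reord, Matrix.trace_kronecker, phiM_trace]
  simp [Matrix.trace_one]

lemma P2_tr : P2.trace = 4 := by
  rw [P2, trace_submatrix_equiv reord, Matrix.trace_kronecker, phiM_trace]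
  simp [Matrix.trace_one]

lemma E12_tr : E12.trace = 1 := by
  rw [E12, trace_submatrix_equiv reord, Matrix.trace_kronecker, phiM_trace]
  norm_num

def rho0 : Matrix I16 I16 ℂ := Matrix.of fun p q =>
  if p.1.1 = p.2.2 ∧ p.1.2 = p.2.1 ∧ q.1.1 = q.2.2 ∧ q.1.2 = q.2.1 then (4:ℂ)⁻¹ else 0

lemma rho0_state : IsState rho0 := by
  constructor
  · refine Matrix.PosSemidef.of_dotProduct_mulVec_nonneg ?_ ?_
    · ext p q
      simp only [rho0, Matrix.conjTranspose_apply, Matrix.of_apply, apply_ite (star : ℂ → ℂ),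
        star_zero]
      split_ifs with h1 h2 h2 <;> first
        | (exfalso; tauto)
        | norm_num
    · intro x
      have hz : star x ⬝ᵥ (rho0 *ᵥ x)
          = (4:ℂ)⁻¹ * (star (x ((0,0),(0,0)) + x ((1,0),(0,1)) + x ((0,1),(1,0)) + x ((1,1),(1,1)))
            * (x ((0,0),(0,0)) + x ((1,0),(0,1)) + x ((0,1),(1,0)) + x ((1,1),(1,1)))) := by
        simp [dotProduct, Matrix.mulVec, rho0, Fintype.sum_prod_type, Fin.sum_univ_two]
        ring
      rw [hz]
      have := star_mul_self_nonneg
        (x ((0,0),(0,0)) + x ((1,0),(0,1)) + x ((0,1),(1,0)) + x ((1,1),(1,1)))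
      have h4 : (0:ℂ) ≤ (4:ℂ)⁻¹ := by
        rw [show ((4:ℂ)⁻¹) = (((4:ℝ)⁻¹ : ℝ) : ℂ) by push_cast; ring]
        exact Complex.zero_le_real.mpr (by norm_num)
      exact mul_nonneg h4 this
  · simp [Matrix.trace, Matrix.diag, rho0, Fintype.sum_prod_type, Fin.sum_univ_two]
    norm_num

lemma rho0_swap : rho0.submatrix ⇑eSw ⇑eSw = E12 := by
  ext ⟨⟨r, s⟩, ⟨a, b⟩⟩ ⟨⟨r', s'⟩, ⟨a', b'⟩⟩
  simp [rho0, E12, eSw, reord, phiM, Matrix.kroneckerMap_apply, Matrix.submatrix_apply]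
  split_ifs <;> first
    | (exfalso; tauto)
    | norm_num

lemma sig1_E12 : sig1 E12 = (4:ℂ)⁻¹ • P1 := by
  ext ⟨⟨r, s⟩, ⟨a, b⟩⟩ ⟨⟨r', s'⟩, ⟨a', b'⟩⟩
  simp only [sig1, lam, E12, P1, phiM, g1, reord, Matrix.submatrix_apply, Matrix.of_apply,
    Matrix.smul_apply, Matrix.kroneckerMap_apply, Matrix.one_apply, Fin.sum_univ_two,
    Equiv.coe_fn_mk, Equiv.coe_fn_symm_mk, smul_eq_mul]
  fin_cases s <;> fin_cases s' <;> fin_cases b <;> fin_cases b' <;>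
    (simp <;> split_ifs <;> first
      | (exfalso; tauto)
      | norm_num)

lemma sig2_E12 : sig2 E12 = (4:ℂ)⁻¹ • P2 := by
  ext ⟨⟨r, s⟩, ⟨a, b⟩⟩ ⟨⟨r', s'⟩, ⟨a', b'⟩⟩
  simp only [sig2, lam, E12, P2, phiM, g2, reord, Matrix.submatrix_apply, Matrix.of_apply,
    Matrix.smul_apply, Matrix.kroneckerMap_apply, Matrix.one_apply, Fin.sum_univ_two,
    Equiv.coe_fn_mk, Equiv.coe_fn_symm_mk, smul_eq_mul]
  fin_cases r <;> fin_cases r' <;> fin_cases a <;> fin_cases a' <;>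
    (simp <;> split_ifs <;> first
      | (exfalso; tauto)
      | norm_num)

lemma sq_lemma (c : ℂ) :
    ((c * 4⁻¹) • P1 + ((1 - c) * 4⁻¹) • P2 - E12) * ((c * 4⁻¹) • P1 + ((1 - c) * 4⁻¹) • P2 - E12)
      = ((3/4 : ℂ) • E12 + (c * 4⁻¹) • (P1 - E12) + ((1 - c) * 4⁻¹) • (P2 - E12))
        * ((3/4 : ℂ) • E12 + (c * 4⁻¹) • (P1 - E12) + ((1 - c) * 4⁻¹) • (P2 - E12)) := by
  simp only [Matrix.add_mul, Matrix.mul_add, Matrix.sub_mul, Matrix.mul_sub,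
    smul_mul_assoc, mul_smul_comm, P11, P22, P12, P21, P1E, EP1, P2E, EP2, EE,
    smul_smul, smul_sub]
  module

lemma witness_val (p : ℝ) (hp : p ∈ Set.Icc (0 : ℝ) 1) :
    (1/2) * traceNorm (idTensor (kpf2Ch p) rho0 - idTensor (swapCh 2) rho0) = 3/4 := by
  rw [idT_kpf, idT_swap, rho0_swap, sig1_E12, sig2_E12]
  have hc1 : (((1 - p) : ℝ) : ℂ) = 1 - ((p:ℝ):ℂ) := by push_cast; ring
  rw [hc1]
  set c : ℂ := ((p:ℝ):ℂ) with hcdef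
  have hXform : c • ((4:ℂ)⁻¹ • P1) + (1 - c) • ((4:ℂ)⁻¹ • P2) - E12
      = (c * 4⁻¹) • P1 + ((1 - c) * 4⁻¹) • P2 - E12 := by
    rw [smul_smul, smul_smul]
  rw [hXform]
  set X : Matrix I16 I16 ℂ := (c * 4⁻¹) • P1 + ((1 - c) * 4⁻¹) • P2 - E12 with hXdef
  set Y : Matrix I16 I16 ℂ :=
    (3/4 : ℂ) • E12 + (c * 4⁻¹) • (P1 - E12) + ((1 - c) * 4⁻¹) • (P2 - E12) with hYdef
  have hstarc : star c = c := by rw [hcdef]; exact Complex.conj_ofReal p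
  have hXherm : Xᴴ = X := by
    rw [hXdef]
    rw [Matrix.conjTranspose_sub, Matrix.conjTranspose_add, Matrix.conjTranspose_smul,
      Matrix.conjTranspose_smul, P1_herm, P2_herm, E12_herm]
    rw [show star (c * 4⁻¹) = c * 4⁻¹ by rw [star_mul', hstarc]; norm_num]
    rw [show star ((1 - c) * 4⁻¹) = (1 - c) * 4⁻¹ by
      rw [star_mul', star_sub, hstarc]; norm_num]
  have hcnn : (0:ℂ) ≤ c * 4⁻¹ := by
    rw [hcdef, show ((p:ℝ):ℂ) * 4⁻¹ = ((p/4 : ℝ) : ℂ) by push_cast; ring]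
    exact Complex.zero_le_real.mpr (by have := hp.1; linarith)
  have hqnn : (0:ℂ) ≤ (1 - c) * 4⁻¹ := by
    rw [hcdef, show (1 - ((p:ℝ):ℂ)) * 4⁻¹ = (((1-p)/4 : ℝ) : ℂ) by push_cast; ring]
    exact Complex.zero_le_real.mpr (by have := hp.2; linarith)
  have hYpsd : Y.PosSemidef := by
    rw [hYdef]
    refine Matrix.PosSemidef.add (Matrix.PosSemidef.add ?_ ?_) ?_
    · refine psd_smul (psd_of_herm_idem E12_herm EE) ?_
      rw [show ((3/4 : ℂ)) = (((3/4 : ℝ)) : ℂ) by push_cast; ring]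
      exact Complex.zero_le_real.mpr (by norm_num)
    · refine psd_smul (psd_of_herm_idem ?_ ?_) hcnn
      · rw [Matrix.conjTranspose_sub, P1_herm, E12_herm]
      · rw [Matrix.sub_mul, Matrix.mul_sub, Matrix.mul_sub, P11, P1E, EP1, EE]
        simp
    · refine psd_smul (psd_of_herm_idem ?_ ?_) hqnn
      · rw [Matrix.conjTranspose_sub, P2_herm, E12_herm]
      · rw [Matrix.sub_mul, Matrix.mul_sub, Matrix.mul_sub, P22, P2E, EP2, EE]
        simp
  have hsq : Y ^ 2 = Xᴴ * X := by
    rw [pow_two, hXherm, hXdef, hYdef]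
    exact (sq_lemma c).symm
  rw [traceNorm_eq_of_sq hYpsd hsq]
  have htrY : Y.trace = 3/2 := by
    rw [hYdef]
    rw [Matrix.trace_add, Matrix.trace_add, Matrix.trace_smul, Matrix.trace_smul,
      Matrix.trace_smul, Matrix.trace_sub, Matrix.trace_sub, P1_tr, P2_tr, E12_tr]
    simp only [smul_eq_mul]
    ring
  rw [htrY]
  norm_num

end Aux

/-- the normalized diamond distance between the second KPF16 protocol and
the ideal qubit swap channel equals `3/4` for every `p ∈ [0,1]`. -/
theorem stmt17 (p : ℝ) (hp : p ∈ Set.Icc (0 : ℝ) 1) :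
    dDist (kpf2Ch p) (swapCh 2) = 3 / 4 := by
  rw [dDist]
  apply le_antisymm
  · apply Real.sSup_le
    · rintro x ⟨ρ, hρ, rfl⟩
      exact Aux.ub p hp ρ hρ
    · norm_num
  · apply le_csSup
    · exact ⟨3/4, by rintro x ⟨ρ, hρ, rfl⟩; exact Aux.ub p hp ρ hρ⟩
    · exact ⟨Aux.rho0, Aux.rho0_state, (Aux.witness_val p hp).symm⟩

end
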